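/- Primal-dual optimality characterization for discrete EOT with strictly positive costs: (P_i) ∈ Γ^N_{a,b} and (λ,f,g) dual feasible are both optimal if and only if (1) f_k + g_l ≤ λ_i (C_i)_{kl} for all i,k,l; (2) ⟨P_i,C_i⟩ = ⟨P_j,C_j⟩ for all i,j; (3) for every i,k,l, if (P_i)_{kl} > 0 then f_k + g_l = λ_i (C_i)_{kl}. -/

import Mathlib

open Finset

/-- Frobenius inner product of two matrices. -/
def dot {n m : ℕ} (P C : Matrix (Fin n) (Fin m) ℝ) : ℝ := ∑ i, ∑ j, P i j * C i j

/-- `P` is a coupling of the probability vectors `a` and `b`. -/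
def IsCoupling {n m : ℕ} (a : Fin n → ℝ) (b : Fin m → ℝ)
    (P : Matrix (Fin n) (Fin m) ℝ) : Prop :=
  (∀ i j, 0 ≤ P i j) ∧ (∀ i, ∑ j, P i j = a i) ∧ (∀ j, ∑ i, P i j = b j)

/-- Discrete optimal transport value. -/
noncomputable def W {n m : ℕ} (a : Fin n → ℝ) (b : Fin m → ℝ)
    (C : Matrix (Fin n) (Fin m) ℝ) : ℝ :=
  sInf {t | ∃ P, IsCoupling a b P ∧ t = dot P C}

/-- The constraint set `Γ^N_{a,b}` of coupling decompositions. -/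
def Gamma (N : ℕ) {n m : ℕ} (a : Fin n → ℝ) (b : Fin m → ℝ) :
    Set (Fin N → Matrix (Fin n) (Fin m) ℝ) :=
  {P | (∀ k i j, 0 ≤ P k i j) ∧ (∀ i, ∑ k, ∑ j, P k i j = a i) ∧
       (∀ j, ∑ k, ∑ i, P k i j = b j)}

/-- Discrete equitable optimal transport value. -/
noncomputable def EOT {N n m : ℕ} (a : Fin n → ℝ) (b : Fin m → ℝ)
    (C : Fin N → Matrix (Fin n) (Fin m) ℝ) : ℝ :=
  sInf {t | ∃ P ∈ Gamma N a b, t = ⨆ i, dot (P i) (C i)}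

set_option maxHeartbeats 1000000 in
lemma strong_duality {N n m : ℕ} (hN : 0 < N) (hn : 0 < n) (hm : 0 < m)
    (a : Fin n → ℝ) (b : Fin m → ℝ) (ha1 : ∑ k, a k = 1)
    (C : Fin N → Fin n → Fin m → ℝ) (hC : ∀ i k j, 0 < C i k j)
    (v δ : ℝ) (hδ : 0 < δ)
    (P : Fin N → Fin n → Fin m → ℝ) (hP0 : ∀ i k j, 0 ≤ P i k j)
    (hPa : ∀ k, ∑ i, ∑ j, P i k j = a k) (hPb : ∀ j, ∑ i, ∑ k, P i k j = b j)
    (hPv : ∀ i, ∑ k, ∑ j, P i k j * C i k j ≤ v)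
    (hopt : ∀ Q : Fin N → Fin n → Fin m → ℝ, (∀ i k j, 0 ≤ Q i k j) →
       (∀ k, ∑ i, ∑ j, Q i k j = a k) → (∀ j, ∑ i, ∑ k, Q i k j = b j) →
       ∀ u : ℝ, (∀ i, ∑ k, ∑ j, Q i k j * C i k j ≤ u) → v ≤ u) :
    ∃ (l : Fin N → ℝ) (f : Fin n → ℝ) (g : Fin m → ℝ),
      (∀ i, 0 ≤ l i) ∧ (∑ i, l i = 1) ∧
      (∀ i k j, f k + g j ≤ l i * C i k j) ∧
      v - δ < ∑ k, f k * a k + ∑ j, g j * b j := by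
  classical
  have hnN : Nonempty (Fin N) := ⟨⟨0, hN⟩⟩
  have hnn : Nonempty (Fin n) := ⟨⟨0, hn⟩⟩
  have hnm : Nonempty (Fin m) := ⟨⟨0, hm⟩⟩
  set Sm := ∑ i, ∑ k, ∑ j, C i k j with hSm
  have hCSm : ∀ i k j, C i k j ≤ Sm := by
    intro i k j
    calc C i k j ≤ ∑ j, C i k j :=
          Finset.single_le_sum (fun j _ => (hC i k j).le) (mem_univ j)
    _ ≤ ∑ k, ∑ j, C i k j :=
          Finset.single_le_sum
            (fun k _ => Finset.sum_nonneg fun j _ => (hC i k j).le) (mem_univ k)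
    _ ≤ Sm :=
          Finset.single_le_sum
            (fun i _ => Finset.sum_nonneg fun k _ =>
              Finset.sum_nonneg fun j _ => (hC i k j).le) (mem_univ i)
  have hSmpos : 0 < Sm :=
    lt_of_lt_of_le (hC (Classical.arbitrary _) (Classical.arbitrary _) (Classical.arbitrary _))
      (hCSm _ _ _)
  have ha0 : ∀ k, 0 ≤ a k := fun k =>
    (hPa k) ▸ Finset.sum_nonneg fun i _ => Finset.sum_nonneg fun j _ => hP0 i k j
  have haub : ∀ k, a k ≤ 1 :=
    fun k => ha1 ▸ Finset.single_le_sum (fun k _ => ha0 k) (mem_univ k)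
  have hP1 : ∀ i k j, P i k j ≤ 1 := by
    intro i k j
    have h1 : P i k j ≤ ∑ j, P i k j :=
      Finset.single_le_sum (fun j _ => hP0 i k j) (mem_univ j)
    have h2 : ∑ j, P i k j ≤ ∑ i, ∑ j, P i k j :=
      Finset.single_le_sum (fun i _ => Finset.sum_nonneg fun j _ => hP0 i k j) (mem_univ i)
    have := hPa k
    have := haub k
    linarith
  have hv0 : 0 ≤ v :=
    le_trans (Finset.sum_nonneg fun k _ => Finset.sum_nonneg fun j _ =>
      mul_nonneg (hP0 _ _ _) (hC _ _ _).le) (hPv (Classical.arbitrary _))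
  have hvSm : v ≤ Sm := by
    refine hopt P hP0 hPa hPb Sm fun i => ?_
    calc ∑ k, ∑ j, P i k j * C i k j ≤ ∑ k, ∑ j, C i k j := by
          refine Finset.sum_le_sum fun k _ => Finset.sum_le_sum fun j _ => ?_
          nlinarith [hP1 i k j, hP0 i k j, hC i k j]
    _ ≤ Sm :=
          Finset.single_le_sum
            (fun i _ => Finset.sum_nonneg fun k _ =>
              Finset.sum_nonneg fun j _ => (hC i k j).le) (mem_univ i)
  set M := 2 * Sm with hM
  set Φ : ((Fin N → Fin n → Fin m → ℝ) × ℝ) → ((Fin n → ℝ) × (Fin m → ℝ) × ℝ) :=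
    fun x => (fun k => ∑ i, ∑ j, x.1 i k j, fun j => ∑ i, ∑ k, x.1 i k j, x.2) with hPhi
  set B : Set ((Fin N → Fin n → Fin m → ℝ) × ℝ) :=
    {x | (∀ i k j, 0 ≤ x.1 i k j) ∧ (∑ i, ∑ k, ∑ j, x.1 i k j ≤ 2) ∧
      (∀ i, ∑ k, ∑ j, x.1 i k j * C i k j ≤ x.2) ∧ x.2 ≤ M} with hBdef
  have contE : ∀ (i : Fin N) (k : Fin n) (j : Fin m),
      Continuous fun x : (Fin N → Fin n → Fin m → ℝ) × ℝ => x.1 i k j := fun i k j =>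
    (continuous_apply j).comp ((continuous_apply k).comp
      ((continuous_apply i).comp continuous_fst))
  have contPhi : Continuous Φ :=
    Continuous.prodMk
      (continuous_pi fun k => continuous_finset_sum _ fun i _ =>
        continuous_finset_sum _ fun j _ => contE i k j)
      (Continuous.prodMk
        (continuous_pi fun j => continuous_finset_sum _ fun i _ =>
          continuous_finset_sum _ fun k _ => contE i k j)
        continuous_snd)
  have hBclosed : IsClosed B := by
    have h1 : IsClosed {x : (Fin N → Fin n → Fin m → ℝ) × ℝ | ∀ i k j, 0 ≤ x.1 i k j} := by
      simp only [Set.setOf_forall]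
      exact isClosed_iInter fun i => isClosed_iInter fun k => isClosed_iInter fun j =>
        isClosed_le continuous_const (contE i k j)
    have h2 : IsClosed {x : (Fin N → Fin n → Fin m → ℝ) × ℝ | ∑ i, ∑ k, ∑ j, x.1 i k j ≤ 2} :=
      isClosed_le (continuous_finset_sum _ fun i _ => continuous_finset_sum _ fun k _ =>
        continuous_finset_sum _ fun j _ => contE i k j) continuous_const
    have h3 : IsClosed {x : (Fin N → Fin n → Fin m → ℝ) × ℝ |
        ∀ i, ∑ k, ∑ j, x.1 i k j * C i k j ≤ x.2} := by
      simp only [Set.setOf_forall]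
      exact isClosed_iInter fun i => isClosed_le
        (continuous_finset_sum _ fun k _ => continuous_finset_sum _ fun j _ =>
          (contE i k j).mul continuous_const) continuous_snd
    have h4 : IsClosed {x : (Fin N → Fin n → Fin m → ℝ) × ℝ | x.2 ≤ M} :=
      isClosed_le continuous_snd continuous_const
    exact h1.inter (h2.inter (h3.inter h4))
  have hBsub : B ⊆ (Set.univ.pi fun _ : Fin N => Set.univ.pi fun _ : Fin n =>
      Set.univ.pi fun _ : Fin m => Set.Icc (0:ℝ) 2) ×ˢ Set.Icc (0:ℝ) M := by
    rintro ⟨Q, u⟩ ⟨hQ0, hQtot, hQd, hQu⟩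
    have hQ2 : ∀ i k j, Q i k j ≤ 2 := by
      intro i k j
      have h1 : Q i k j ≤ ∑ j, Q i k j :=
        Finset.single_le_sum (fun j _ => hQ0 i k j) (mem_univ j)
      have h2 : ∑ j, Q i k j ≤ ∑ k, ∑ j, Q i k j :=
        Finset.single_le_sum (fun k _ => Finset.sum_nonneg fun j _ => hQ0 i k j) (mem_univ k)
      have h3 : ∑ k, ∑ j, Q i k j ≤ ∑ i, ∑ k, ∑ j, Q i k j :=
        Finset.single_le_sum (fun i _ => Finset.sum_nonneg fun k _ =>
          Finset.sum_nonneg fun j _ => hQ0 i k j) (mem_univ i)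
      linarith
    have hu0 : 0 ≤ u :=
      le_trans (Finset.sum_nonneg fun k _ => Finset.sum_nonneg fun j _ =>
        mul_nonneg (hQ0 _ _ _) (hC _ _ _).le) (hQd (Classical.arbitrary _))
    constructor
    · simp only [Set.mem_univ_pi, Set.mem_Icc]
      exact fun i k j => ⟨hQ0 i k j, hQ2 i k j⟩
    · exact ⟨hu0, hQu⟩
  have hBcompact : IsCompact B :=
    IsCompact.of_isClosed_subset
      (((isCompact_univ_pi fun _ => isCompact_univ_pi fun _ =>
        isCompact_univ_pi fun _ => isCompact_Icc)).prod isCompact_Icc) hBclosed hBsub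
  have hAconvex : Convex ℝ (Φ '' B) := by
    rintro y1 ⟨x1, hx1, rfl⟩ y2 ⟨x2, hx2, rfl⟩ s r hs hr hsr
    obtain ⟨h10, h1t, h1d, h1u⟩ := hx1
    obtain ⟨h20, h2t, h2d, h2u⟩ := hx2
    refine ⟨s • x1 + r • x2, ⟨?_, ?_, ?_, ?_⟩, ?_⟩
    · intro i k j
      simp only [Prod.fst_add, Prod.smul_fst, Pi.add_apply, Pi.smul_apply, smul_eq_mul]
      exact add_nonneg (mul_nonneg hs (h10 i k j)) (mul_nonneg hr (h20 i k j))
    · simp only [Prod.fst_add, Prod.smul_fst, Pi.add_apply, Pi.smul_apply, smul_eq_mul,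
        Finset.sum_add_distrib, ← Finset.mul_sum]
      nlinarith [mul_le_mul_of_nonneg_left h1t hs, mul_le_mul_of_nonneg_left h2t hr]
    · intro i
      simp only [Prod.fst_add, Prod.snd_add, Prod.smul_fst, Prod.smul_snd, Pi.add_apply,
        Pi.smul_apply, smul_eq_mul, add_mul, mul_assoc, Finset.sum_add_distrib, ← Finset.mul_sum]
      have := mul_le_mul_of_nonneg_left (h1d i) hs
      have := mul_le_mul_of_nonneg_left (h2d i) hr
      linarith
    · simp only [Prod.snd_add, Prod.smul_snd, smul_eq_mul]
      nlinarith [mul_le_mul_of_nonneg_left h1u hs, mul_le_mul_of_nonneg_left h2u hr]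
    · simp only [hPhi, Prod.fst_add, Prod.snd_add, Prod.smul_fst, Prod.smul_snd, Pi.add_apply,
        Pi.smul_apply, smul_eq_mul, Prod.smul_mk, Prod.mk_add_mk, Prod.mk.injEq]
      refine ⟨?_, ?_, trivial⟩
      · funext k
        simp only [Pi.add_apply, Pi.smul_apply, smul_eq_mul, Finset.sum_add_distrib,
          ← Finset.mul_sum]
      · funext j
        simp only [Pi.add_apply, Pi.smul_apply, smul_eq_mul, Finset.sum_add_distrib,
          ← Finset.mul_sum]
  have hx0 : ((a, b, v - δ) : (Fin n → ℝ) × (Fin m → ℝ) × ℝ) ∉ Φ '' B := by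
    rintro ⟨⟨Q, u⟩, ⟨hQ0, hQtot, hQd, hQu⟩, heq⟩
    have h1 : ∀ k, ∑ i, ∑ j, Q i k j = a k := fun k =>
      congrFun (congrArg Prod.fst heq) k
    have h2 : ∀ j, ∑ i, ∑ k, Q i k j = b j := fun j =>
      congrFun (congrArg (fun y => y.2.1) heq) j
    have h3 : u = v - δ := congrArg (fun y => y.2.2) heq
    have := hopt Q hQ0 h1 h2 u hQd
    linarith
  obtain ⟨φ, c, hx0c, hAc⟩ :=
    geometric_hahn_banach_point_closed hAconvex ((hBcompact.image contPhi).isClosed) hx0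
  set F : Fin n → ℝ := fun k => φ (Pi.single k 1, 0, 0) with hF
  set G : Fin m → ℝ := fun j => φ (0, Pi.single j 1, 0) with hG
  set μ : ℝ := φ (0, 0, 1) with hmu
  have phi_eval : ∀ (r : Fin n → ℝ) (s : Fin m → ℝ) (u : ℝ),
      φ (r, s, u) = (∑ k, r k * F k) + (∑ j, s j * G j) + u * μ := by
    intro r s u
    have hsplit : φ (r, s, u) = φ (r, 0, 0) + φ (0, s, 0) + φ (0, 0, u) := by
      rw [← map_add, ← map_add]
      congr 1
      simp [Prod.mk_add_mk]
    have h1 : φ (r, 0, 0) = ∑ k, r k * F k := by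
      have hd : ((r, 0, 0) : (Fin n → ℝ) × (Fin m → ℝ) × ℝ)
          = ∑ k, r k • ((Pi.single k 1 : Fin n → ℝ), (0 : Fin m → ℝ), (0 : ℝ)) := by
        rw [Prod.ext_iff]
        constructor
        · rw [Prod.fst_sum]
          funext k'
          simp only [Prod.smul_mk, Finset.sum_apply, Pi.smul_apply, Pi.single_apply,
            smul_eq_mul, mul_ite, mul_one, mul_zero]
          simp
        · rw [Prod.snd_sum]
          simp
      rw [hd, map_sum]
      simp only [map_smul, smul_eq_mul, hF]
    have h2 : φ (0, s, 0) = ∑ j, s j * G j := by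
      have hd : ((0, s, 0) : (Fin n → ℝ) × (Fin m → ℝ) × ℝ)
          = ∑ j, s j • ((0 : Fin n → ℝ), (Pi.single j 1 : Fin m → ℝ), (0 : ℝ)) := by
        rw [Prod.ext_iff]
        constructor
        · rw [Prod.fst_sum]
          simp
        · rw [Prod.snd_sum]
          rw [Prod.ext_iff]
          constructor
          · rw [Prod.fst_sum]
            funext j'
            simp only [Prod.smul_mk, Finset.sum_apply, Pi.smul_apply, Pi.single_apply,
              smul_eq_mul, mul_ite, mul_one, mul_zero]
            simp
          · rw [Prod.snd_sum]
            simp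
      rw [hd, map_sum]
      simp only [map_smul, smul_eq_mul, hG]
    have h3 : φ (0, 0, u) = u * μ := by
      have hd : ((0, 0, u) : (Fin n → ℝ) × (Fin m → ℝ) × ℝ)
          = u • ((0 : Fin n → ℝ), (0 : Fin m → ℝ), (1 : ℝ)) := by
        simp [Prod.smul_mk]
      rw [hd, map_smul, smul_eq_mul, hmu]
    rw [hsplit, h1, h2, h3]
  have hsep : ∀ Q u, ((Q, u) : (Fin N → Fin n → Fin m → ℝ) × ℝ) ∈ B →
      c < (∑ k, (∑ i, ∑ j, Q i k j) * F k) + (∑ j, (∑ i, ∑ k, Q i k j) * G j) + u * μ := by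
    intro Q u h
    have h0 := hAc (Φ (Q, u)) ⟨(Q, u), h, rfl⟩
    simp only [hPhi] at h0
    rw [phi_eval] at h0
    exact h0
  have hx0lt : (∑ k, a k * F k) + (∑ j, b j * G j) + (v - δ) * μ < c := by
    have := hx0c
    rw [phi_eval] at this
    exact this
  have hPB : ((P, v) : (Fin N → Fin n → Fin m → ℝ) × ℝ) ∈ B := by
    refine ⟨hP0, ?_, hPv, by simp only [hM]; linarith⟩
    have : ∑ i, ∑ k, ∑ j, P i k j = ∑ k, ∑ i, ∑ j, P i k j := Finset.sum_comm
    rw [this]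
    simp only [hPa]
    rw [ha1]
    norm_num
  have hvc : c < (∑ k, a k * F k) + (∑ j, b j * G j) + v * μ := by
    have := hsep P v hPB
    simp only [hPa, hPb] at this
    exact this
  have hmupos : 0 < μ := by nlinarith
  have hmune : μ ≠ 0 := ne_of_gt hmupos
  set f' : Fin n → ℝ := fun k => (c - F k) / μ with hf'
  set g' : Fin m → ℝ := fun j => -G j / μ with hg'
  have hval : v - δ < ∑ k, f' k * a k + ∑ j, g' j * b j := by
    have e1 : ∑ k, f' k * a k + ∑ j, g' j * b j
        = (c - ((∑ k, a k * F k) + (∑ j, b j * G j))) / μ := by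
      rw [eq_div_iff hmune, add_mul, Finset.sum_mul, Finset.sum_mul]
      have e2 : ∀ k : Fin n, f' k * a k * μ = c * a k - a k * F k := by
        intro k; simp only [hf']; field_simp
      have e3 : ∀ j : Fin m, g' j * b j * μ = -(b j * G j) := by
        intro j; simp only [hg']; field_simp
      rw [Finset.sum_congr rfl fun k _ => e2 k, Finset.sum_congr rfl fun j _ => e3 j]
      rw [Finset.sum_sub_distrib, ← Finset.mul_sum, ha1, Finset.sum_neg_distrib]
      ring
    rw [e1, lt_div_iff₀ hmupos]
    linarith
  have hne : (univ : Finset (Fin n × Fin m)).Nonempty := univ_nonempty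
  set t : Fin N → ℝ :=
    fun i => univ.sup' hne (fun p : Fin n × Fin m => (f' p.1 + g' p.2) / C i p.1 p.2) with ht
  have ht1 : ∀ i k j, f' k + g' j ≤ t i * C i k j := by
    intro i k j
    have h0 : (f' k + g' j) / C i k j ≤ t i :=
      Finset.le_sup' (fun p : Fin n × Fin m => (f' p.1 + g' p.2) / C i p.1 p.2)
        (mem_univ ((k, j) : Fin n × Fin m))
    exact (div_le_iff₀ (hC i k j)).mp h0
  have ht2 : ∀ i, ∃ p : Fin n × Fin m, t i = (f' p.1 + g' p.2) / C i p.1 p.2 := by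
    intro i
    obtain ⟨p, -, hp⟩ := Finset.exists_mem_eq_sup' hne
      (fun p : Fin n × Fin m => (f' p.1 + g' p.2) / C i p.1 p.2)
    exact ⟨p, hp⟩
  choose pt hpt using ht2
  set T := ∑ i, max (t i) 0 with hT
  have hT1 : T ≤ 1 := by
    by_contra hcon
    push_neg at hcon
    set Ac : Finset (Fin N) := univ.filter (fun i => 0 < t i) with hAcdef
    have hAcne : Ac.Nonempty := by
      by_contra hem
      rw [Finset.not_nonempty_iff_eq_empty] at hem
      have hT0 : T = 0 := by
        rw [hT]
        apply Finset.sum_eq_zero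
        intro i _
        have hni : ¬ 0 < t i := by
          intro h
          have : i ∈ Ac := by simp [hAcdef, h]
          simp [hem] at this
        simp [max_eq_right (not_lt.mp hni)]
      linarith
    have hTA : T = ∑ i ∈ Ac, t i := by
      rw [hT, ← Finset.sum_filter_add_sum_filter_not univ (fun i => 0 < t i)]
      have e1 : ∑ i ∈ univ.filter (fun i => 0 < t i), max (t i) 0 = ∑ i ∈ Ac, t i :=
        Finset.sum_congr rfl fun i hi => by
          rw [Finset.mem_filter] at hi
          exact max_eq_left hi.2.le
      have e2 : ∑ i ∈ univ.filter (fun i => ¬ 0 < t i), max (t i) 0 = 0 :=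
        Finset.sum_eq_zero fun i hi => by
          rw [Finset.mem_filter] at hi
          exact max_eq_right (not_lt.mp hi.2)
      rw [e1, e2, add_zero]
    set ρ := ∑ i ∈ Ac, 1 / C i (pt i).1 (pt i).2 with hρ
    have hρpos : 0 < ρ := Finset.sum_pos (fun i _ => one_div_pos.mpr (hC _ _ _)) hAcne
    set σ := 1 / ρ with hσ
    have hσpos : 0 < σ := by positivity
    have hσρ : σ * ρ = 1 := by
      rw [hσ, one_div_mul_cancel (ne_of_gt hρpos)]
    set Q : Fin N → Fin n → Fin m → ℝ := fun i k j =>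
      if 0 < t i ∧ k = (pt i).1 ∧ j = (pt i).2 then σ / C i (pt i).1 (pt i).2 else 0 with hQdef
    have hQin : ∀ (i : Fin N) (w : Fin n → Fin m → ℝ),
        ∑ k, ∑ j, Q i k j * w k j
          = if 0 < t i then σ / C i (pt i).1 (pt i).2 * w (pt i).1 (pt i).2 else 0 := by
      intro i w
      by_cases hti : 0 < t i
      · have e1 : ∀ k : Fin n, ∑ j, Q i k j * w k j
            = if k = (pt i).1 then σ / C i (pt i).1 (pt i).2 * w (pt i).1 (pt i).2 else 0 := by
          intro k
          by_cases hk : k = (pt i).1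
          · subst hk
            rw [if_pos rfl, Finset.sum_eq_single_of_mem (pt i).2 (mem_univ _)]
            · simp [hQdef, hti]
            · intro j _ hj; simp [hQdef, hj]
          · rw [if_neg hk]
            exact Finset.sum_eq_zero fun j _ => by simp [hQdef, hk]
        rw [Finset.sum_congr rfl fun k _ => e1 k, Finset.sum_ite_eq' univ (pt i).1,
          if_pos (mem_univ _), if_pos hti]
      · rw [if_neg hti]
        refine Finset.sum_eq_zero fun k _ => Finset.sum_eq_zero fun j _ => by simp [hQdef, hti]
    have hQ0 : ∀ i k j, 0 ≤ Q i k j := by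
      intro i k j
      simp only [hQdef]
      split
      · exact div_nonneg hσpos.le (hC _ _ _).le
      · exact le_refl 0
    have hQtot' : ∀ i, ∑ k, ∑ j, Q i k j = if 0 < t i then σ / C i (pt i).1 (pt i).2 else 0 := by
      intro i
      have := hQin i (fun _ _ => 1)
      simpa using this
    have htot : ∑ i, ∑ k, ∑ j, Q i k j = 1 := by
      rw [Finset.sum_congr rfl fun i _ => hQtot' i, ← Finset.sum_filter]
      rw [Finset.sum_congr rfl (fun i _ => div_eq_mul_one_div σ _), ← Finset.mul_sum, ← hρ, hσρ]
    have hQd : ∀ i, ∑ k, ∑ j, Q i k j * C i k j ≤ σ := by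
      intro i
      rw [hQin i (fun k j => C i k j)]
      rcases lt_or_ge 0 (t i) with h | h
      · rw [if_pos h, div_mul_cancel₀ _ (ne_of_gt (hC _ _ _))]
      · rw [if_neg (not_lt.mpr h)]; exact hσpos.le
    have hσM : σ ≤ M := by
      obtain ⟨i0, hi0⟩ := hAcne
      have h1 : 1 / C i0 (pt i0).1 (pt i0).2 ≤ ρ :=
        Finset.single_le_sum (f := fun i => 1 / C i (pt i).1 (pt i).2)
          (fun i _ => (one_div_pos.mpr (hC _ _ _)).le) hi0
      have h2 : σ ≤ C i0 (pt i0).1 (pt i0).2 := by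
        rw [hσ]
        calc 1/ρ ≤ 1/(1 / C i0 (pt i0).1 (pt i0).2) :=
              one_div_le_one_div_of_le (one_div_pos.mpr (hC _ _ _)) h1
        _ = _ := one_div_one_div _
      have := hCSm i0 (pt i0).1 (pt i0).2
      rw [hM]; linarith
    have eF : ∑ k, (∑ i, ∑ j, Q i k j) * F k
        = ∑ i ∈ Ac, σ / C i (pt i).1 (pt i).2 * F (pt i).1 := by
      calc ∑ k, (∑ i, ∑ j, Q i k j) * F k = ∑ k, ∑ i, ∑ j, Q i k j * F k := by
            simp [Finset.sum_mul]
      _ = ∑ i, ∑ k, ∑ j, Q i k j * F k := Finset.sum_comm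
      _ = ∑ i, if 0 < t i then σ / C i (pt i).1 (pt i).2 * F (pt i).1 else 0 :=
            Finset.sum_congr rfl fun i _ => hQin i (fun k _ => F k)
      _ = _ := (Finset.sum_filter _ _).symm
    have eG : ∑ j, (∑ i, ∑ k, Q i k j) * G j
        = ∑ i ∈ Ac, σ / C i (pt i).1 (pt i).2 * G (pt i).2 := by
      calc ∑ j, (∑ i, ∑ k, Q i k j) * G j = ∑ j, ∑ i, ∑ k, Q i k j * G j := by
            simp [Finset.sum_mul]
      _ = ∑ i, ∑ j, ∑ k, Q i k j * G j := Finset.sum_comm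
      _ = ∑ i, ∑ k, ∑ j, Q i k j * G j := Finset.sum_congr rfl fun i _ => Finset.sum_comm
      _ = ∑ i, if 0 < t i then σ / C i (pt i).1 (pt i).2 * G (pt i).2 else 0 :=
            Finset.sum_congr rfl fun i _ => hQin i (fun _ j => G j)
      _ = _ := (Finset.sum_filter _ _).symm
    have e6 : ∀ i ∈ Ac,
        σ / C i (pt i).1 (pt i).2 * F (pt i).1 + σ / C i (pt i).1 (pt i).2 * G (pt i).2
          = c * (σ / C i (pt i).1 (pt i).2) - μ * σ * t i := by
      intro i hi
      have hCp : (0:ℝ) < C i (pt i).1 (pt i).2 := hC _ _ _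
      have h1 : μ * f' (pt i).1 = c - F (pt i).1 := by
        simp only [hf']; field_simp
      have h2 : μ * g' (pt i).2 = -G (pt i).2 := by
        simp only [hg']; field_simp
      have h3 : f' (pt i).1 + g' (pt i).2 = t i * C i (pt i).1 (pt i).2 := by
        rw [hpt i, div_mul_cancel₀ _ (ne_of_gt hCp)]
      have h4 : F (pt i).1 + G (pt i).2 = c - μ * (t i * C i (pt i).1 (pt i).2) := by
        rw [← h3, mul_add]; linarith
      rw [← mul_add, h4]
      field_simp
    have e7 : ∑ i ∈ Ac,
        (σ / C i (pt i).1 (pt i).2 * F (pt i).1 + σ / C i (pt i).1 (pt i).2 * G (pt i).2)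
          = c - μ * σ * T := by
      rw [Finset.sum_congr rfl e6, Finset.sum_sub_distrib]
      have e8 : ∑ i ∈ Ac, c * (σ / C i (pt i).1 (pt i).2) = c := by
        rw [← Finset.mul_sum]
        rw [Finset.sum_congr rfl (fun i _ => div_eq_mul_one_div σ _), ← Finset.mul_sum, ← hρ,
          hσρ, mul_one]
      have e9 : ∑ i ∈ Ac, μ * σ * t i = μ * σ * T := by
        rw [← Finset.mul_sum, ← hTA]
      rw [e8, e9]
    have key := hsep Q σ ⟨hQ0, by rw [htot]; norm_num, hQd, hσM⟩
    rw [eF, eG, ← Finset.sum_add_distrib, e7] at key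
    have hms : 0 < μ * σ := mul_pos hmupos hσpos
    have h5 : μ * σ * 1 < μ * σ * T := mul_lt_mul_of_pos_left hcon hms
    have h6 : σ * μ = μ * σ * 1 := by ring
    linarith [key]
  refine ⟨fun i => max (t i) 0 + (1 - T)/N, f', g', ?_, ?_, ?_, hval⟩
  · intro i
    have h1 : (0:ℝ) ≤ (1 - T)/N := div_nonneg (by linarith) (Nat.cast_nonneg N)
    have h2 := le_max_right (t i) 0
    linarith
  · rw [Finset.sum_add_distrib, Finset.sum_const, card_univ, Fintype.card_fin, nsmul_eq_mul,
      ← hT]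
    have hNne : (N:ℝ) ≠ 0 := Nat.cast_ne_zero.mpr hN.ne'
    field_simp
    ring
  · intro i k j
    have h1 := ht1 i k j
    have h2 : (0:ℝ) ≤ (1 - T)/N := div_nonneg (by linarith) (Nat.cast_nonneg N)
    have h3 : t i ≤ max (t i) 0 + (1 - T)/N := by
      have := le_max_left (t i) 0; linarith
    have h4 := mul_le_mul_of_nonneg_right h3 (hC i k j).le
    linarith

lemma dot_pair_sum {N n m : ℕ} (a : Fin n → ℝ) (b : Fin m → ℝ)
    (Q : Fin N → Matrix (Fin n) (Fin m) ℝ)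
    (hQa : ∀ k, ∑ i, ∑ j, Q i k j = a k) (hQb : ∀ j, ∑ i, ∑ k, Q i k j = b j)
    (f : Fin n → ℝ) (g : Fin m → ℝ) :
    ∑ k, f k * a k + ∑ j, g j * b j = ∑ i, ∑ k, ∑ j, Q i k j * (f k + g j) := by
  have h1 : ∑ k, f k * a k = ∑ i, ∑ k, ∑ j, Q i k j * f k := by
    calc ∑ k, f k * a k = ∑ k, ∑ i, ∑ j, Q i k j * f k := by
          refine Finset.sum_congr rfl fun k _ => ?_
          rw [← hQa k, mul_comm]
          simp [Finset.sum_mul]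
    _ = ∑ i, ∑ k, ∑ j, Q i k j * f k := Finset.sum_comm
  have h2 : ∑ j, g j * b j = ∑ i, ∑ k, ∑ j, Q i k j * g j := by
    calc ∑ j, g j * b j = ∑ j, ∑ i, ∑ k, Q i k j * g j := by
          refine Finset.sum_congr rfl fun j _ => ?_
          rw [← hQb j, mul_comm]
          simp [Finset.sum_mul]
    _ = ∑ i, ∑ j, ∑ k, Q i k j * g j := Finset.sum_comm
    _ = ∑ i, ∑ k, ∑ j, Q i k j * g j := Finset.sum_congr rfl fun i _ => Finset.sum_comm
  rw [h1, h2, ← Finset.sum_add_distrib]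
  refine Finset.sum_congr rfl fun i _ => ?_
  rw [← Finset.sum_add_distrib]
  refine Finset.sum_congr rfl fun k _ => ?_
  rw [← Finset.sum_add_distrib]
  exact Finset.sum_congr rfl fun j _ => (mul_add _ _ _).symm

lemma pair_le {N n m : ℕ} (C Q : Fin N → Matrix (Fin n) (Fin m) ℝ)
    (hQ0 : ∀ i k j, 0 ≤ Q i k j) (l : Fin N → ℝ) (f : Fin n → ℝ) (g : Fin m → ℝ)
    (hfeas : ∀ i k j, f k + g j ≤ l i * C i k j) :
    ∑ i, ∑ k, ∑ j, Q i k j * (f k + g j) ≤ ∑ i, l i * dot (Q i) (C i) := by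
  refine Finset.sum_le_sum fun i _ => ?_
  simp only [dot]
  rw [Finset.mul_sum]
  refine Finset.sum_le_sum fun k _ => ?_
  rw [Finset.mul_sum]
  refine Finset.sum_le_sum fun j _ => ?_
  calc Q i k j * (f k + g j) ≤ Q i k j * (l i * C i k j) :=
        mul_le_mul_of_nonneg_left (hfeas i k j) (hQ0 i k j)
  _ = l i * (Q i k j * C i k j) := by ring

set_option maxHeartbeats 800000 in
lemma equal_costs {N n m : ℕ} (hN : 0 < N) (a : Fin n → ℝ) (b : Fin m → ℝ)
    (ha : a ∈ stdSimplex ℝ (Fin n))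
    (C : Fin N → Matrix (Fin n) (Fin m) ℝ) (hC : ∀ i k l, 0 < C i k l)
    (P : Fin N → Matrix (Fin n) (Fin m) ℝ) (hP : P ∈ Gamma N a b)
    (hopt : ∀ Q ∈ Gamma N a b, (⨆ i, dot (P i) (C i)) ≤ ⨆ i, dot (Q i) (C i)) :
    ∀ i j, dot (P i) (C i) = dot (P j) (C j) := by
  classical
  haveI : Nonempty (Fin N) := ⟨⟨0, hN⟩⟩
  obtain ⟨hP0, hPa, hPb⟩ := hP
  set D := fun i => dot (P i) (C i) with hD
  have hD0 : ∀ i, 0 ≤ D i := fun i => Finset.sum_nonneg fun k _ =>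
    Finset.sum_nonneg fun j _ => mul_nonneg (hP0 i k j) (hC i k j).le
  obtain ⟨imax, himax⟩ := Finite.exists_max D
  obtain ⟨imin, himin⟩ := Finite.exists_min D
  have hbdd : BddAbove (Set.range D) := Set.Finite.bddAbove (Set.finite_range D)
  have hsup : (⨆ i, D i) = D imax := le_antisymm (ciSup_le himax) (le_ciSup hbdd imax)
  set v := D imax with hv
  have hapos : ∃ k, 0 < a k := by
    by_contra hno
    push_neg at hno
    have h0 : ∑ k, a k ≤ 0 := Finset.sum_nonpos fun k _ => hno k
    rw [ha.2] at h0
    linarith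
  obtain ⟨k0, hk0⟩ := hapos
  have hPpos : ∃ i j, 0 < P i k0 j := by
    by_contra hno
    push_neg at hno
    have h0 : ∑ i, ∑ j, P i k0 j ≤ 0 :=
      Finset.sum_nonpos fun i _ => Finset.sum_nonpos fun j _ => hno i j
    rw [hPa k0] at h0
    linarith
  obtain ⟨i1, j1, hij⟩ := hPpos
  have hvpos : 0 < v := by
    have h1 : P i1 k0 j1 * C i1 k0 j1 ≤ D i1 := by
      calc P i1 k0 j1 * C i1 k0 j1 ≤ ∑ j, P i1 k0 j * C i1 k0 j :=
            Finset.single_le_sum (f := fun j => P i1 k0 j * C i1 k0 j)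
              (fun j _ => mul_nonneg (hP0 _ _ _) (hC _ _ _).le) (mem_univ j1)
      _ ≤ ∑ k, ∑ j, P i1 k j * C i1 k j :=
            Finset.single_le_sum (f := fun k => ∑ j, P i1 k j * C i1 k j)
              (fun k _ => Finset.sum_nonneg fun j _ =>
              mul_nonneg (hP0 _ _ _) (hC _ _ _).le) (mem_univ k0)
      _ = D i1 := rfl
    have := himax i1
    nlinarith [hC i1 k0 j1]
  suffices hs : v ≤ D imin by
    intro i j
    have e1 : D i = v := le_antisymm (himax i) (le_trans hs (himin i))
    have e2 : D j = v := le_antisymm (himax j) (le_trans hs (himin j))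
    show D i = D j
    rw [e1, e2]
  by_contra hlt
  push_neg at hlt
  set S : Matrix (Fin n) (Fin m) ℝ := Matrix.of fun k j => ∑ i, P i k j with hS
  have hSapp : ∀ k j, S k j = ∑ i, P i k j := fun k j => rfl
  have hS0 : ∀ k j, 0 ≤ S k j := fun k j => by
    rw [hSapp]; exact Finset.sum_nonneg fun i _ => hP0 i k j
  set K := dot S (C imin) with hK
  have hK0 : 0 ≤ K := Finset.sum_nonneg fun k _ => Finset.sum_nonneg fun j _ =>
    mul_nonneg (hS0 k j) (hC _ _ _).le
  set ε : ℝ := min (1/2) ((v - D imin)/(2*(K+1))) with hεdef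
  have hεpos : 0 < ε := lt_min (by norm_num) (div_pos (by linarith) (by linarith))
  have hε1 : ε ≤ 1/2 := min_le_left _ _
  have hεK : ε * (K+1) ≤ (v - D imin)/2 := by
    have h1 : ε ≤ (v - D imin)/(2*(K+1)) := min_le_right _ _
    have h2 : (0:ℝ) < K + 1 := by linarith
    calc ε * (K+1) ≤ (v - D imin)/(2*(K+1)) * (K+1) :=
          mul_le_mul_of_nonneg_right h1 h2.le
    _ = (v - D imin)/2 := by field_simp
  set Q : Fin N → Matrix (Fin n) (Fin m) ℝ := fun i => Matrix.of fun k j =>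
    (1 - ε) * P i k j + (if i = imin then ε * S k j else 0) with hQ
  have hQapp : ∀ i k j, Q i k j = (1 - ε) * P i k j + (if i = imin then ε * S k j else 0) :=
    fun i k j => rfl
  have hQΓ : Q ∈ Gamma N a b := by
    refine ⟨?_, ?_, ?_⟩
    · intro i k j
      rw [hQapp]
      have := hP0 i k j
      have := hS0 k j
      split
      · nlinarith
      · nlinarith
    · intro k
      have e1 : ∀ i, ∑ j, Q i k j
          = (1 - ε) * ∑ j, P i k j + (if i = imin then ε * ∑ j, S k j else 0) := by
        intro i
        rw [Finset.sum_congr rfl fun j _ => hQapp i k j, Finset.sum_add_distrib, ← Finset.mul_sum]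
        congr 1
        split
        · rw [← Finset.mul_sum]
        · simp
      rw [Finset.sum_congr rfl fun i _ => e1 i, Finset.sum_add_distrib, ← Finset.mul_sum,
        Finset.sum_ite_eq' univ imin, if_pos (mem_univ _), hPa k]
      have e2 : ∑ j, S k j = a k := by
        calc ∑ j, S k j = ∑ j, ∑ i, P i k j := rfl
        _ = ∑ i, ∑ j, P i k j := Finset.sum_comm
        _ = a k := hPa k
      rw [e2]; ring
    · intro j
      have e1 : ∀ i, ∑ k, Q i k j
          = (1 - ε) * ∑ k, P i k j + (if i = imin then ε * ∑ k, S k j else 0) := by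
        intro i
        rw [Finset.sum_congr rfl fun k _ => hQapp i k j, Finset.sum_add_distrib, ← Finset.mul_sum]
        congr 1
        split
        · rw [← Finset.mul_sum]
        · simp
      rw [Finset.sum_congr rfl fun i _ => e1 i, Finset.sum_add_distrib, ← Finset.mul_sum,
        Finset.sum_ite_eq' univ imin, if_pos (mem_univ _), hPb j]
      have e2 : ∑ k, S k j = b j := by
        calc ∑ k, S k j = ∑ k, ∑ i, P i k j := rfl
        _ = ∑ i, ∑ k, P i k j := Finset.sum_comm
        _ = b j := hPb j
      rw [e2]; ring
  have hQdot : ∀ i, dot (Q i) (C i) = (1 - ε) * D i + (if i = imin then ε * dot S (C i) else 0) := by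
    intro i
    have e1 : ∀ k, ∑ j, Q i k j * C i k j
        = (1 - ε) * ∑ j, P i k j * C i k j
          + (if i = imin then ε * ∑ j, S k j * C i k j else 0) := by
      intro k
      have e0 : ∀ j, Q i k j * C i k j
          = (1 - ε) * (P i k j * C i k j) + (if i = imin then ε * (S k j * C i k j) else 0) := by
        intro j
        rw [hQapp]
        split <;> ring
      rw [Finset.sum_congr rfl fun j _ => e0 j, Finset.sum_add_distrib, ← Finset.mul_sum]
      congr 1
      split
      · rw [← Finset.mul_sum]
      · simp
    show ∑ k, ∑ j, Q i k j * C i k j = _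
    rw [Finset.sum_congr rfl fun k _ => e1 k, Finset.sum_add_distrib, ← Finset.mul_sum]
    have e2 : ∑ k, (if i = imin then ε * ∑ j, S k j * C i k j else 0)
        = if i = imin then ε * dot S (C i) else 0 := by
      by_cases hi : i = imin
      · simp only [if_pos hi, ← Finset.mul_sum]
        rfl
      · simp only [if_neg hi, Finset.sum_const_zero]
    rw [e2]
    rfl
  have hub : ∀ i, dot (Q i) (C i) ≤ max ((1-ε)*v) ((v + D imin)/2) := by
    intro i
    rw [hQdot i]
    by_cases hi : i = imin
    · rw [if_pos hi, hi]
      have h1 : (1-ε) * D imin ≤ D imin := by nlinarith [hD0 imin]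
      have h2 : ε * K ≤ (v - D imin)/2 := by nlinarith
      refine le_trans ?_ (le_max_right _ _)
      rw [← hK]
      linarith
    · rw [if_neg hi, add_zero]
      refine le_trans ?_ (le_max_left _ _)
      have := himax i
      have h3 : (0:ℝ) ≤ 1 - ε := by linarith
      exact mul_le_mul_of_nonneg_left (himax i) h3
  have hmax_lt : max ((1-ε)*v) ((v + D imin)/2) < v := by
    apply max_lt
    · nlinarith
    · linarith
  have h2 := hopt Q hQΓ
  rw [hsup] at h2
  have h3 : (⨆ i, dot (Q i) (C i)) ≤ max ((1-ε)*v) ((v + D imin)/2) := ciSup_le hub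
  have h4 : v ≤ max ((1-ε)*v) ((v + D imin)/2) := le_trans h2 h3
  linarith [lt_of_le_of_lt h4 hmax_lt]

/-- Primal-dual optimality characterization for discrete EOT with strictly
positive costs: `P` primal optimal and `(λ,f,g)` dual optimal iff
(1) dual feasibility, (2) equal costs, (3) complementary slackness. -/
theorem stmt_12 (N n m : ℕ) (hN : 0 < N) (a : Fin n → ℝ) (b : Fin m → ℝ)
    (ha : a ∈ stdSimplex ℝ (Fin n)) (hb : b ∈ stdSimplex ℝ (Fin m))
    (C : Fin N → Matrix (Fin n) (Fin m) ℝ) (hC : ∀ i k l, 0 < C i k l)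
    (P : Fin N → Matrix (Fin n) (Fin m) ℝ) (hP : P ∈ Gamma N a b)
    (l : Fin N → ℝ) (hl : l ∈ stdSimplex ℝ (Fin N))
    (f : Fin n → ℝ) (g : Fin m → ℝ) :
    ((∀ Q ∈ Gamma N a b, (⨆ i, dot (P i) (C i)) ≤ ⨆ i, dot (Q i) (C i)) ∧
     (∀ i k j, f k + g j ≤ l i * C i k j) ∧
     (∀ l' ∈ stdSimplex ℝ (Fin N), ∀ f' : Fin n → ℝ, ∀ g' : Fin m → ℝ,
        (∀ i k j, f' k + g' j ≤ l' i * C i k j) →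
        ∑ k, f' k * a k + ∑ j, g' j * b j ≤ ∑ k, f k * a k + ∑ j, g j * b j)) ↔
    ((∀ i k j, f k + g j ≤ l i * C i k j) ∧
     (∀ i j, dot (P i) (C i) = dot (P j) (C j)) ∧
     (∀ i k j, 0 < P i k j → f k + g j = l i * C i k j)) := by
  classical
  haveI hNE : Nonempty (Fin N) := ⟨⟨0, hN⟩⟩
  have hn : 0 < n := by
    rcases Nat.eq_zero_or_pos n with h | h
    · exfalso; have h2 := ha.2; subst h; simp at h2
    · exact h
  have hm : 0 < m := by
    rcases Nat.eq_zero_or_pos m with h | h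
    · exfalso; have h2 := hb.2; subst h; simp at h2
    · exact h
  obtain ⟨hP0, hPa, hPb⟩ := hP
  have hbddP : BddAbove (Set.range fun i => dot (P i) (C i)) :=
    Set.Finite.bddAbove (Set.finite_range _)
  constructor
  · rintro ⟨hopt, hfeas, hdopt⟩
    have heq := equal_costs hN a b ha C hC P ⟨hP0, hPa, hPb⟩ hopt
    set v := ⨆ i, dot (P i) (C i) with hv
    set d := ∑ k, f k * a k + ∑ j, g j * b j with hd
    have i0 : Fin N := Classical.arbitrary _
    have hDv : ∀ i, dot (P i) (C i) = v := by
      intro i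
      have h1 : v = dot (P i0) (C i0) :=
        le_antisymm (ciSup_le fun j => (heq j i0).le) (le_ciSup hbddP i0)
      rw [h1]; exact heq i i0
    have hlv : ∑ i, l i * dot (P i) (C i) = v := by
      rw [Finset.sum_congr rfl fun i _ => by rw [hDv i]]
      rw [← Finset.sum_mul, hl.2, one_mul]
    have hd_le : d ≤ v := by
      calc d = ∑ i, ∑ k, ∑ j, P i k j * (f k + g j) := dot_pair_sum a b P hPa hPb f g
      _ ≤ ∑ i, l i * dot (P i) (C i) := pair_le C P hP0 l f g hfeas
      _ = v := hlv
    have hd_ge : v ≤ d := by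
      by_contra hno
      push_neg at hno
      have hδ : 0 < v - d := by linarith
      have hPv : ∀ i, ∑ k, ∑ j, P i k j * C i k j ≤ v := fun i => le_of_eq (hDv i)
      have hopt' : ∀ Q : Fin N → Fin n → Fin m → ℝ, (∀ i k j, 0 ≤ Q i k j) →
          (∀ k, ∑ i, ∑ j, Q i k j = a k) → (∀ j, ∑ i, ∑ k, Q i k j = b j) →
          ∀ u : ℝ, (∀ i, ∑ k, ∑ j, Q i k j * C i k j ≤ u) → v ≤ u := by
        intro Q h0 h1 h2 u hu
        have h3 := hopt (fun i => Matrix.of (Q i)) ⟨h0, h1, h2⟩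
        refine le_trans h3 (ciSup_le fun i => ?_)
        exact hu i
      obtain ⟨l', f', g', hl'0, hl'1, hfeas', hval'⟩ :=
        strong_duality hN hn hm a b ha.2 (fun i k j => C i k j) hC v (v - d) hδ
          (fun i k j => P i k j) hP0 hPa hPb hPv hopt'
      have h5 := hdopt l' ⟨hl'0, hl'1⟩ f' g' hfeas'
      linarith
    have hdv : d = v := le_antisymm hd_le hd_ge
    have hsum_eq : ∑ i, ∑ k, ∑ j, P i k j * (f k + g j)
        = ∑ i, ∑ k, ∑ j, P i k j * (l i * C i k j) := by
      have h1 : d = ∑ i, ∑ k, ∑ j, P i k j * (f k + g j) := dot_pair_sum a b P hPa hPb f g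
      have h2 : ∑ i, ∑ k, ∑ j, P i k j * (l i * C i k j) = ∑ i, l i * dot (P i) (C i) := by
        refine Finset.sum_congr rfl fun i _ => ?_
        simp only [dot, Finset.mul_sum]
        exact Finset.sum_congr rfl fun k _ => Finset.sum_congr rfl fun j _ => by ring
      rw [← h1, h2, hlv, hdv]
    have hterm : ∀ i' k' j',
        0 ≤ P i' k' j' * (l i' * C i' k' j') - P i' k' j' * (f k' + g j') :=
      fun i' k' j' => sub_nonneg.mpr
        (mul_le_mul_of_nonneg_left (hfeas i' k' j') (hP0 i' k' j'))
    have hzero : ∑ i', ∑ k', ∑ j',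
        (P i' k' j' * (l i' * C i' k' j') - P i' k' j' * (f k' + g j')) = 0 := by
      simp only [Finset.sum_sub_distrib]
      rw [hsum_eq, sub_self]
    refine ⟨hfeas, heq, ?_⟩
    intro i k j hPpos
    by_contra hne
    have hstrict : P i k j * (f k + g j) < P i k j * (l i * C i k j) :=
      mul_lt_mul_of_pos_left (lt_of_le_of_ne (hfeas i k j) hne) hPpos
    have hpos : 0 < ∑ i', ∑ k', ∑ j',
        (P i' k' j' * (l i' * C i' k' j') - P i' k' j' * (f k' + g j')) := by
      have h1 : 0 < P i k j * (l i * C i k j) - P i k j * (f k + g j) := by linarith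
      calc (0:ℝ) < P i k j * (l i * C i k j) - P i k j * (f k + g j) := h1
      _ ≤ ∑ j', (P i k j' * (l i * C i k j') - P i k j' * (f k + g j')) :=
            Finset.single_le_sum
              (f := fun j' => P i k j' * (l i * C i k j') - P i k j' * (f k + g j'))
              (fun j' _ => hterm i k j') (mem_univ j)
      _ ≤ ∑ k', ∑ j', (P i k' j' * (l i * C i k' j') - P i k' j' * (f k' + g j')) :=
            Finset.single_le_sum
              (f := fun k' => ∑ j', (P i k' j' * (l i * C i k' j') - P i k' j' * (f k' + g j')))
              (fun k' _ => Finset.sum_nonneg fun j' _ => hterm i k' j') (mem_univ k)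
      _ ≤ ∑ i', ∑ k', ∑ j', (P i' k' j' * (l i' * C i' k' j') - P i' k' j' * (f k' + g j')) :=
            Finset.single_le_sum
              (f := fun i' => ∑ k', ∑ j',
                (P i' k' j' * (l i' * C i' k' j') - P i' k' j' * (f k' + g j')))
              (fun i' _ => Finset.sum_nonneg fun k' _ =>
                Finset.sum_nonneg fun j' _ => hterm i' k' j') (mem_univ i)
    linarith
  · rintro ⟨hfeas, heq, hslack⟩
    have i0 : Fin N := Classical.arbitrary _
    set d0 := dot (P i0) (C i0) with hd0
    have hsupP : (⨆ i, dot (P i) (C i)) = d0 :=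
      le_antisymm (ciSup_le fun i => (heq i i0).le) (le_ciSup hbddP i0)
    have hterm_eq : ∀ i k j, P i k j * (f k + g j) = P i k j * (l i * C i k j) := by
      intro i k j
      rcases (hP0 i k j).lt_or_eq with h | h
      · rw [hslack i k j h]
      · rw [← h]; ring
    have hd_eq : ∑ k, f k * a k + ∑ j, g j * b j = d0 := by
      calc ∑ k, f k * a k + ∑ j, g j * b j = ∑ i, ∑ k, ∑ j, P i k j * (f k + g j) :=
            dot_pair_sum a b P hPa hPb f g
      _ = ∑ i, ∑ k, ∑ j, P i k j * (l i * C i k j) :=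
            Finset.sum_congr rfl fun i _ => Finset.sum_congr rfl fun k _ =>
              Finset.sum_congr rfl fun j _ => hterm_eq i k j
      _ = ∑ i, l i * dot (P i) (C i) := by
            refine Finset.sum_congr rfl fun i _ => ?_
            simp only [dot, Finset.mul_sum]
            exact Finset.sum_congr rfl fun k _ => Finset.sum_congr rfl fun j _ => by ring
      _ = ∑ i, l i * d0 := Finset.sum_congr rfl fun i _ => by rw [heq i i0]
      _ = d0 := by rw [← Finset.sum_mul, hl.2, one_mul]
    refine ⟨?_, hfeas, ?_⟩
    · intro Q hQ
      obtain ⟨hQ0, hQa, hQb⟩ := hQ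
      have hQbdd : BddAbove (Set.range fun i => dot (Q i) (C i)) :=
        Set.Finite.bddAbove (Set.finite_range _)
      rw [hsupP]
      calc d0 = ∑ k, f k * a k + ∑ j, g j * b j := hd_eq.symm
      _ = ∑ i, ∑ k, ∑ j, Q i k j * (f k + g j) := dot_pair_sum a b Q hQa hQb f g
      _ ≤ ∑ i, l i * dot (Q i) (C i) := pair_le C Q hQ0 l f g hfeas
      _ ≤ ∑ i, l i * (⨆ i', dot (Q i') (C i')) :=
            Finset.sum_le_sum fun i _ =>
              mul_le_mul_of_nonneg_left (le_ciSup hQbdd i) (hl.1 i)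
      _ = ⨆ i', dot (Q i') (C i') := by rw [← Finset.sum_mul, hl.2, one_mul]
    · intro l' hl' f' g' hfeas'
      calc ∑ k, f' k * a k + ∑ j, g' j * b j
          = ∑ i, ∑ k, ∑ j, P i k j * (f' k + g' j) := dot_pair_sum a b P hPa hPb f' g'
      _ ≤ ∑ i, l' i * dot (P i) (C i) := pair_le C P hP0 l' f' g' hfeas'
      _ = ∑ i, l' i * d0 := Finset.sum_congr rfl fun i _ => by rw [heq i i0]
      _ = d0 := by rw [← Finset.sum_mul, hl'.2, one_mul]
      _ = ∑ k, f k * a k + ∑ j, g j * b j := hd_eq.symm
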